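/- Let z = (z_i)_{i=1}^N ∈ (ℝ^d)^N and for x ∈ (ℝ^d)^N let Q(x) be the d×d matrix with entries q^{αβ}(x) = Σ_{i=1}^N z_i^α x_i^β. Suppose θ : O → SO(d) is a differentiable map on an open set O ⊆ (ℝ^d)^N such that Q(x)θ(x) is symmetric for every x ∈ O, and suppose that at a point x ∈ O the linear map X ↦ Proj(Q(x)θ(x)X) is invertible on so(d). Then for every 1 ≤ γ ≤ d and 1 ≤ i ≤ N, ∂θ/∂x_i^γ(x) = θ(x) {Proj ∘ (Q(x)θ(x)·)}^{-1} Proj{(θ(x)^{-1} e_γ) ⊗ z_i}, where e_γ is the γ-th standard unit vector of ℝ^d and (u ⊗ w)^{αβ} = u^α w^β. -/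

import Mathlib

open Matrix

/-- Membership in the special orthogonal group SO(d). -/
def IsSO {d : ℕ} (θ : Matrix (Fin d) (Fin d) ℝ) : Prop :=
  θ * θᵀ = 1 ∧ θ.det = 1

/-- The matrix Q(x) with entries q^{αβ}(x) = Σ_i z_i^α x_i^β. -/
noncomputable def Qmat {d N : ℕ} (z x : Fin N → EuclideanSpace ℝ (Fin d)) :
    Matrix (Fin d) (Fin d) ℝ :=
  fun α β => ∑ i : Fin N, z i α * x i β

/-- Proj : M(d) → so(d), Proj Y = (Y − Yᵀ)/2, the orthogonal projection onto the
skew-symmetric matrices. -/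
noncomputable def projSkew {d : ℕ} (M : Matrix (Fin d) (Fin d) ℝ) : Matrix (Fin d) (Fin d) ℝ :=
  (1 / 2 : ℝ) • (M - Mᵀ)

/-- The matrix of partial derivatives ∂θ/∂x_i^γ (x) of a matrix-valued map
θ : (ℝ^d)^N → M(d), i.e. the entrywise derivative of θ at x in the direction of the γ-th
coordinate of the i-th particle. -/
noncomputable def partialTheta {d N : ℕ}
    (θ : (Fin N → EuclideanSpace ℝ (Fin d)) → Matrix (Fin d) (Fin d) ℝ)
    (x : Fin N → EuclideanSpace ℝ (Fin d)) (i : Fin N) (γ : Fin d) :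
    Matrix (Fin d) (Fin d) ℝ :=
  fun α β => fderiv ℝ (fun y => θ y α β) x (Pi.single i (EuclideanSpace.single γ (1 : ℝ)))

/-- Auxiliary: the continuous linear map `y ↦ y j k` on `(ℝ^d)^N`. -/
noncomputable def coordL {d N : ℕ} (j : Fin N) (k : Fin d) :
    (Fin N → EuclideanSpace ℝ (Fin d)) →L[ℝ] ℝ :=
  (EuclideanSpace.proj k : EuclideanSpace ℝ (Fin d) →L[ℝ] ℝ).comp
    (ContinuousLinearMap.proj j)

lemma coordL_single {d N : ℕ} (i j : Fin N) (γ k : Fin d) :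
    coordL j k (Pi.single i (EuclideanSpace.single γ (1:ℝ))) = if j = i ∧ k = γ then 1 else 0 := by
  simp [coordL, Pi.single_apply, EuclideanSpace.single_apply,
    apply_ite (fun u : EuclideanSpace ℝ (Fin d) => u k)]
  split <;> simp_all

lemma hasFDerivAt_Qmat {d N : ℕ} (z : Fin N → EuclideanSpace ℝ (Fin d)) (α k : Fin d)
    (x : Fin N → EuclideanSpace ℝ (Fin d)) :
    HasFDerivAt (fun y => Qmat z y α k) (∑ j : Fin N, z j α • coordL j k) x := by
  have : (fun y => Qmat z y α k) = fun y => ∑ j : Fin N, z j α * y j k := rfl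
  rw [this]
  exact HasFDerivAt.fun_sum fun j _ => ((coordL j k).hasFDerivAt (x := x)).const_mul (z j α)

/- STATEMENT 15 -/

theorem stmt15 {d N : ℕ} (z : Fin N → EuclideanSpace ℝ (Fin d))
    (O : Set (Fin N → EuclideanSpace ℝ (Fin d))) (hO : IsOpen O)
    (θ : (Fin N → EuclideanSpace ℝ (Fin d)) → Matrix (Fin d) (Fin d) ℝ)
    (hθSO : ∀ y ∈ O, IsSO (θ y))
    (hθdiff : ∀ α β : Fin d, DifferentiableOn ℝ (fun y => θ y α β) O)
    (hsym : ∀ y ∈ O, (Qmat z y * θ y)ᵀ = Qmat z y * θ y)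
    (x : Fin N → EuclideanSpace ℝ (Fin d)) (hx : x ∈ O)
    (hinv : ∀ Y : Matrix (Fin d) (Fin d) ℝ, Yᵀ = -Y →
      ∃! X : Matrix (Fin d) (Fin d) ℝ, Xᵀ = -X ∧ projSkew (Qmat z x * θ x * X) = Y) :
    ∀ (γ : Fin d) (i : Fin N),
      ∃ X : Matrix (Fin d) (Fin d) ℝ, Xᵀ = -X ∧
        projSkew (Qmat z x * θ x * X) =
          projSkew (vecMulVec ((θ x)⁻¹ *ᵥ Pi.single γ (1 : ℝ)) (fun β => z i β)) ∧
        partialTheta θ x i γ = θ x * X := by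
  intro γ i
  classical
  set v : Fin N → EuclideanSpace ℝ (Fin d) := Pi.single i (EuclideanSpace.single γ (1:ℝ)) with hv
  set T : Matrix (Fin d) (Fin d) ℝ := θ x with hTdef
  set A : Matrix (Fin d) (Fin d) ℝ := partialTheta θ x i γ with hAdef
  have hTT : T * Tᵀ = 1 := (hθSO x hx).1
  have hTtT : Tᵀ * T = 1 := mul_eq_one_comm.mp hTT
  have hTinv : T⁻¹ = Tᵀ := Matrix.inv_eq_right_inv hTT
  have hmem : O ∈ nhds x := hO.mem_nhds hx
  have hdF : ∀ α β, HasFDerivAt (fun y => θ y α β) (fderiv ℝ (fun y => θ y α β) x) x :=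
    fun α β => ((hθdiff α β).differentiableAt hmem).hasFDerivAt
  have hAval : ∀ α β, fderiv ℝ (fun y => θ y α β) x v = A α β := fun α β => rfl
  -- Step 1: differentiating θθᵀ = 1 gives `T * Aᵀ + A * Tᵀ = 0`
  have hE1 : T * Aᵀ + A * Tᵀ = 0 := by
    ext α β
    have hsum : HasFDerivAt (fun y => ∑ k, θ y α k * θ y β k)
        (∑ k, (θ x α k • fderiv ℝ (fun y => θ y β k) x
              + θ x β k • fderiv ℝ (fun y => θ y α k) x)) x :=
      HasFDerivAt.fun_sum fun k _ => (hdF α k).mul (hdF β k)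
    have hconst : HasFDerivAt (fun y => ∑ k, θ y α k * θ y β k)
        (0 : (Fin N → EuclideanSpace ℝ (Fin d)) →L[ℝ] ℝ) x := by
      have hev : (fun y => ∑ k, θ y α k * θ y β k)
          =ᶠ[nhds x] fun _ => (1 : Matrix (Fin d) (Fin d) ℝ) α β := by
        filter_upwards [hmem] with y hy
        have h1 := (hθSO y hy).1
        calc (∑ k, θ y α k * θ y β k) = (θ y * (θ y)ᵀ) α β := by
              simp [Matrix.mul_apply]
          _ = (1 : Matrix (Fin d) (Fin d) ℝ) α β := by rw [h1]
      exact (hasFDerivAt_const _ _).congr_of_eventuallyEq hev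
    have h0 := hsum.unique hconst
    have h0v := congrFun (congrArg DFunLike.coe h0) v
    simp only [ContinuousLinearMap.coe_sum', Finset.sum_apply,
      ContinuousLinearMap.add_apply, ContinuousLinearMap.smul_apply, smul_eq_mul,
      ContinuousLinearMap.zero_apply, hAval] at h0v
    simp only [Matrix.add_apply, Matrix.mul_apply, Matrix.transpose_apply,
      Matrix.zero_apply, ← hTdef]
    rw [← Finset.sum_add_distrib]
    rw [← h0v]
    congr 1; funext k; ring
  -- Step 2: differentiating `(Qθ)ᵀ = Qθ` gives the entrywise relation
  have hE2 : ∀ α β, z i α * T γ β + (Qmat z x * A) α β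
      = z i β * T γ α + (Qmat z x * A) β α := by
    intro α β
    have hQθF : ∀ a b, HasFDerivAt (fun y => (Qmat z y * θ y) a b)
        (∑ k, (Qmat z x a k • fderiv ℝ (fun y => θ y k b) x
              + θ x k b • (∑ j : Fin N, z j a • coordL j k))) x := by
      intro a b
      have hfun : (fun y => (Qmat z y * θ y) a b) = fun y => ∑ k, Qmat z y a k * θ y k b := by
        funext y; simp [Matrix.mul_apply]
      rw [hfun]
      exact HasFDerivAt.fun_sum fun k _ => (hasFDerivAt_Qmat z a k x).mul (hdF k b)
    have hzero : HasFDerivAt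
        (fun y => (Qmat z y * θ y) α β - (Qmat z y * θ y) β α)
        (0 : (Fin N → EuclideanSpace ℝ (Fin d)) →L[ℝ] ℝ) x := by
      have hev : (fun y => (Qmat z y * θ y) α β - (Qmat z y * θ y) β α)
          =ᶠ[nhds x] fun _ => (0 : ℝ) := by
        filter_upwards [hmem] with y hy
        have h1 := hsym y hy
        have h2 : (Qmat z y * θ y) β α = (Qmat z y * θ y) α β := by
          have := congrFun (congrFun h1 α) β; simpa using this
        simp [h2]
      exact (hasFDerivAt_const _ _).congr_of_eventuallyEq hev
    have h0 := ((hQθF α β).sub (hQθF β α)).unique hzero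
    have h0v := congrFun (congrArg DFunLike.coe h0) v
    simp only [ContinuousLinearMap.sub_apply, ContinuousLinearMap.coe_sum',
      Finset.sum_apply, ContinuousLinearMap.add_apply, ContinuousLinearMap.smul_apply,
      smul_eq_mul, ContinuousLinearMap.zero_apply, hAval] at h0v
    simp only [hv, coordL_single] at h0v
    have hsimp : ∀ a b : Fin d,
        (∑ k, (Qmat z x a k * A k b
            + θ x k b * (∑ j : Fin N, z j a * if j = i ∧ k = γ then 1 else 0)))
        = (Qmat z x * A) a b + z i a * T γ b := by
      intro a b
      rw [Finset.sum_add_distrib, Matrix.mul_apply]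
      congr 1
      have : ∀ k : Fin d, (∑ j : Fin N, z j a * if j = i ∧ k = γ then 1 else 0)
          = if k = γ then z i a else 0 := by
        intro k
        by_cases hk : k = γ
        · simp [hk]
        · simp [hk]
      simp only [this]
      simp only [mul_ite, mul_zero]
      rw [Finset.sum_ite_eq' Finset.univ γ (fun k => θ x k b * z i a)]
      simp [hTdef, mul_comm]
    rw [hsimp α β, hsimp β α] at h0v
    linarith [h0v]
  -- Assemble
  refine ⟨Tᵀ * A, ?_, ?_, ?_⟩
  · -- skewness
    have h1 : T * Aᵀ = -(A * Tᵀ) := eq_neg_of_add_eq_zero_left hE1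
    have h2 : Aᵀ = -(Tᵀ * (A * Tᵀ)) := by
      calc Aᵀ = (Tᵀ * T) * Aᵀ := by rw [hTtT, Matrix.one_mul]
        _ = Tᵀ * (T * Aᵀ) := by rw [Matrix.mul_assoc]
        _ = -(Tᵀ * (A * Tᵀ)) := by rw [h1, Matrix.mul_neg]
    calc (Tᵀ * A)ᵀ = Aᵀ * T := by rw [Matrix.transpose_mul, Matrix.transpose_transpose]
      _ = -(Tᵀ * (A * Tᵀ)) * T := by rw [h2]
      _ = -(Tᵀ * A * (Tᵀ * T)) := by
          rw [Matrix.neg_mul]; congr 1; simp [Matrix.mul_assoc]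
      _ = -(Tᵀ * A) := by rw [hTtT, Matrix.mul_one]
  · -- the projSkew equation
    have hred : Qmat z x * T * (Tᵀ * A) = Qmat z x * A := by
      calc Qmat z x * T * (Tᵀ * A) = Qmat z x * (T * Tᵀ) * A := by
            rw [Matrix.mul_assoc, Matrix.mul_assoc, Matrix.mul_assoc]
        _ = Qmat z x * A := by rw [hTT, Matrix.mul_one]
    rw [hred, hTinv]
    ext α β
    have hu : ∀ a : Fin d, (Tᵀ *ᵥ Pi.single γ (1:ℝ)) a = T γ a := by
      intro a
      simp [Matrix.mulVec, dotProduct, Pi.single_apply, Matrix.transpose_apply]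
    have h2 := hE2 α β
    simp only [projSkew, Matrix.smul_apply, Matrix.sub_apply, Matrix.transpose_apply,
      Matrix.vecMulVec_apply, hu, smul_eq_mul]
    ring_nf
    nlinarith [h2]
  · -- partialTheta = T * X
    calc A = (T * Tᵀ) * A := by rw [hTT, Matrix.one_mul]
      _ = T * (Tᵀ * A) := by rw [Matrix.mul_assoc]
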